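/- Let P = {x ∈ ℝ^n : Ax ≤ b, 0 ≤ x_i ≤ u_i for i ∈ I} be a rational polytope with I = {1,…,l}, and let ℬ = (B^1,…,B^l) be a binarization scheme in which each B^i ∈ Γ^{u_i}_{u_i} is a unimodular binarization polytope. Then proj_x(SC^q(P_ℬ, I_ℬ)) = conv(P^I), where q = Σ_{i=1}^l ⌈log₂(u_i+1)⌉. -/

import Mathlib

open Set

/-- The split closure of `P` with respect to a family `Λ` of (integral) linear
functionals: the intersection over all `f ∈ Λ` and all integers `c` of the convex
hull of `P` minus the split set `{x : c < f x < c + 1}`. -/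
noncomputable def splitClosure {E : Type*} [AddCommGroup E] [Module ℝ E]
    (Λ : Set (E → ℝ)) (P : Set E) : Set E :=
  ⋂ f ∈ Λ, ⋂ c : ℤ, convexHull ℝ (P \ {x | (c : ℝ) < f x ∧ f x < c + 1})

/-- A rational polytope in `ℝ × ℝ^q`: the convex hull of finitely many rational points. -/
def IsRatPolytopeBin (q : ℕ) (B : Set (ℝ × (Fin q → ℝ))) : Prop :=
  ∃ V : Finset (ℝ × (Fin q → ℝ)),
    (∀ p ∈ V, (∃ r : ℚ, p.1 = (r : ℝ)) ∧ ∀ j, ∃ r : ℚ, p.2 j = (r : ℝ)) ∧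
    B = convexHull ℝ (V : Set (ℝ × (Fin q → ℝ)))

/-- `B ∈ Γ^q_u`: a binarization polytope for a variable `x ∈ {0,…,u}` using `q` binary
variables: a rational polytope contained in `[0,u] × [0,1]^q` whose set of 0-1 points
projects (in the `x` coordinate) exactly onto `{0,1,…,u}`. -/
def IsBinPoly (u q : ℕ) (B : Set (ℝ × (Fin q → ℝ))) : Prop :=
  IsRatPolytopeBin q B ∧
  (∀ p ∈ B, 0 ≤ p.1 ∧ p.1 ≤ (u : ℝ) ∧ ∀ j, 0 ≤ p.2 j ∧ p.2 j ≤ 1) ∧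
  Prod.fst '' (B ∩ {p | ∀ j, p.2 j = 0 ∨ p.2 j = 1}) = {x : ℝ | ∃ k : ℕ, k ≤ u ∧ x = (k : ℝ)}

/-- A unimodular binarization polytope `B ∈ Γ^u_u`: a perfect binarization polytope
`B = conv{(j, w^j) : j = 0,…,u}` with `w^j ∈ {0,1}^u` such that the `u × u` matrix
with columns `w^j - w^0`, `j = 1,…,u`, is unimodular (integral with determinant `±1`). -/
def IsUnimodularBin (u : ℕ) (B : Set (ℝ × (Fin u → ℝ))) : Prop :=
  IsBinPoly u u B ∧
  ∃ w : Fin (u + 1) → Fin u → ℝ,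
    (∀ j i, w j i = 0 ∨ w j i = 1) ∧
    B = convexHull ℝ {p : ℝ × (Fin u → ℝ) | ∃ j : Fin (u + 1), p = (((j : ℕ) : ℝ), w j)} ∧
    ∃ N : Matrix (Fin u) (Fin u) ℤ,
      (∀ i j : Fin u, (N i j : ℝ) = w j.succ i - w 0 i) ∧ (N.det = 1 ∨ N.det = -1)

/-- The binary extended formulation `P_ℬ ⊆ ℝ^n × ℝ^{q₁} × ⋯ × ℝ^{q_l}` associated with a
binarization scheme `ℬ = (B^1,…,B^l)`: the set of `(x,z)` with `x ∈ P` and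
`(x_i, z_i) ∈ B^i` for each `i ∈ I = {1,…,l}`. -/
def extForm {n l : ℕ} (hln : l ≤ n) {q : Fin l → ℕ} (P : Set (Fin n → ℝ))
    (B : (i : Fin l) → Set (ℝ × (Fin (q i) → ℝ))) :
    Set ((Fin n → ℝ) × ((i : Fin l) → Fin (q i) → ℝ)) :=
  {p | p.1 ∈ P ∧ ∀ i : Fin l, (p.1 (Fin.castLE hln i), p.2 i) ∈ B i}

/-- The family of split functionals on the extended space corresponding to the index set
`I_ℬ = {1,…,l} ∪ {n+1,…,n+q}`: integer coefficients on `x_1,…,x_l` and on all of the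
binarization variables `z`, zero coefficients on `x_{l+1},…,x_n`. -/
def extSplits (n l : ℕ) (hln : l ≤ n) (q : Fin l → ℕ) :
    Set (((Fin n → ℝ) × ((i : Fin l) → Fin (q i) → ℝ)) → ℝ) :=
  {f | ∃ (π : Fin l → ℤ) (c : (i : Fin l) → Fin (q i) → ℤ),
    f = fun p => (∑ i, (π i : ℝ) * p.1 (Fin.castLE hln i)) +
      ∑ i, ∑ j, (c i j : ℝ) * p.2 i j}

/-! ### Auxiliary lemmas -/

lemma face_lemma {E : Type*} [AddCommGroup E] [Module ℝ E] (F : E →ₗ[ℝ] ℝ) (r : ℝ)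
    (X : Set E) (hX : ∀ x ∈ X, r ≤ F x) :
    convexHull ℝ X ∩ {p | F p = r} ⊆ convexHull ℝ (X ∩ {p | F p = r}) := by
  classical
  rintro p ⟨hp, hpr⟩
  rw [convexHull_eq] at hp
  obtain ⟨ι, t, w, z, hw0, hw1, hz, hp⟩ := hp
  have hFp : F p = ∑ i ∈ t, w i * F (z i) := by
    rw [← hp, Finset.centerMass_eq_of_sum_1 _ _ hw1, map_sum]
    simp [smul_eq_mul]
  have hsum0 : ∑ i ∈ t, w i * (F (z i) - r) = 0 := by
    have : ∑ i ∈ t, w i * (F (z i) - r) = (∑ i ∈ t, w i * F (z i)) - (∑ i ∈ t, w i) * r := by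
      rw [Finset.sum_mul, ← Finset.sum_sub_distrib]
      congr 1; ext i; ring
    rw [this, hw1, ← hFp, hpr]; ring
  have hterm : ∀ i ∈ t, w i ≠ 0 → F (z i) = r := by
    intro i hi hwne
    have h0 := (Finset.sum_eq_zero_iff_of_nonneg (fun i hi =>
      mul_nonneg (hw0 i hi) (sub_nonneg.2 (hX _ (hz i hi))))).mp hsum0 i hi
    rcases mul_eq_zero.mp h0 with h | h
    · exact absurd h hwne
    · linarith [sub_eq_zero.mp h]
  have hmass : (t.filter (fun i => w i ≠ 0)).centerMass w z = p := by
    rw [Finset.centerMass_filter_ne_zero, hp]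
  rw [← hmass]
  refine Finset.centerMass_mem_convexHull _ (fun i hi => hw0 i (Finset.mem_filter.mp hi).1) ?_ ?_
  · rw [Finset.sum_filter_ne_zero, hw1]; norm_num
  · intro i hi
    obtain ⟨hit, hwne⟩ := Finset.mem_filter.mp hi
    exact ⟨hz i hit, hterm i hit hwne⟩

lemma face_lemma' {E : Type*} [AddCommGroup E] [Module ℝ E] (F : E →ₗ[ℝ] ℝ) (r : ℝ)
    (X : Set E) (hX : ∀ x ∈ X, F x ≤ r) :
    convexHull ℝ X ∩ {p | F p = r} ⊆ convexHull ℝ (X ∩ {p | F p = r}) := by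
  have h := face_lemma (-F) (-r) X (fun x hx => by simpa using hX x hx)
  have e1 : {p : E | (-F) p = -r} = {p : E | F p = r} := by
    ext p; simp [neg_eq_iff_eq_neg]
  rw [e1] at h
  exact h

lemma core_lemma {E : Type*} [AddCommGroup E] [Module ℝ E] (F : E →ₗ[ℝ] ℝ) (c : ℤ)
    (X Y : Set E) (hX : ∀ x ∈ X, (c : ℝ) ≤ F x ∧ F x ≤ (c : ℝ) + 1)
    (hY : Y ⊆ convexHull ℝ X) :
    convexHull ℝ (Y \ {p | (c : ℝ) < F p ∧ F p < (c : ℝ) + 1}) ⊆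
      convexHull ℝ (X ∩ {p | F p = (c : ℝ) ∨ F p = (c : ℝ) + 1}) := by
  refine convexHull_min ?_ (convex_convexHull ℝ _)
  rintro p ⟨hpY, hpS⟩
  have hpX : p ∈ convexHull ℝ X := hY hpY
  have hlb : (c : ℝ) ≤ F p := by
    have : convexHull ℝ X ⊆ {p | (c : ℝ) ≤ F p} :=
      convexHull_min (fun x hx => (hX x hx).1) (convex_halfSpace_ge F.isLinear _)
    exact this hpX
  have hub : F p ≤ (c : ℝ) + 1 := by
    have : convexHull ℝ X ⊆ {p | F p ≤ (c : ℝ) + 1} :=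
      convexHull_min (fun x hx => (hX x hx).2) (convex_halfSpace_le F.isLinear _)
    exact this hpX
  have hcase : F p = (c : ℝ) ∨ F p = (c : ℝ) + 1 := by
    simp only [Set.mem_setOf_eq, not_and, not_lt] at hpS
    rcases lt_or_eq_of_le hlb with h | h
    · right; linarith [hpS h]
    · left; exact h.symm
  rcases hcase with h | h
  · have := face_lemma F (c : ℝ) X (fun x hx => (hX x hx).1) ⟨hpX, h⟩
    exact convexHull_mono (by intro x hx; exact ⟨hx.1, Or.inl hx.2⟩) this
  · have := face_lemma' F ((c : ℝ) + 1) X (fun x hx => (hX x hx).2) ⟨hpX, h⟩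
    exact convexHull_mono (by intro x hx; exact ⟨hx.1, Or.inr hx.2⟩) this

lemma step_lemma {E : Type*} [AddCommGroup E] [Module ℝ E] (Λ : Set (E → ℝ))
    (F : E →ₗ[ℝ] ℝ) (hmem : ⇑F ∈ Λ) (c : ℤ) (Y : Set E) :
    splitClosure Λ Y ⊆ convexHull ℝ (Y \ {p | (c : ℝ) < F p ∧ F p < (c : ℝ) + 1}) := by
  intro x hx
  exact Set.mem_iInter.mp (Set.mem_iInter₂.mp hx (⇑F) hmem) c

lemma gen_lemma {E : Type*} [AddCommGroup E] [Module ℝ E] (Λ : Set (E → ℝ)) :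
    ∀ (L : List ((E →ₗ[ℝ] ℝ) × ℤ)) (X Y : Set E),
      (∀ pr ∈ L, ⇑pr.1 ∈ Λ) →
      (∀ pr ∈ L, ∀ x ∈ X, ((pr.2 : ℝ) ≤ pr.1 x ∧ pr.1 x ≤ (pr.2 : ℝ) + 1)) →
      Y ⊆ convexHull ℝ X →
      (splitClosure Λ)^[L.length] Y ⊆
        convexHull ℝ (X ∩ {p | ∀ pr ∈ L, pr.1 p = (pr.2 : ℝ) ∨ pr.1 p = (pr.2 : ℝ) + 1})
  | [] => by
      intro X Y _ _ hY
      have he : {p : E | ∀ pr ∈ ([] : List ((E →ₗ[ℝ] ℝ) × ℤ)),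
          pr.1 p = (pr.2 : ℝ) ∨ pr.1 p = (pr.2 : ℝ) + 1} = Set.univ := by
        ext p; simp
      simpa [he] using hY
  | pr :: L => by
      intro X Y hmem hbd hY
      rw [List.length_cons, Function.iterate_succ_apply]
      set X' := X ∩ {p | pr.1 p = (pr.2 : ℝ) ∨ pr.1 p = (pr.2 : ℝ) + 1} with hX'
      have h1 : splitClosure Λ Y ⊆ convexHull ℝ X' :=
        (step_lemma Λ pr.1 (hmem pr (by simp)) pr.2 Y).trans
          (core_lemma pr.1 pr.2 X Y (fun x hx => hbd pr (by simp) x hx) hY)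
      have h2 := gen_lemma Λ L X' (splitClosure Λ Y)
        (fun p hp => hmem p (List.mem_cons_of_mem _ hp))
        (fun p hp x hx => hbd p (List.mem_cons_of_mem _ hp) x hx.1) h1
      refine h2.trans (convexHull_mono ?_)
      rintro x ⟨⟨hx1, hx2⟩, hx3⟩
      refine ⟨hx1, ?_⟩
      intro p hp
      rcases List.mem_cons.mp hp with h | h
      · subst h; exact hx2
      · exact hx3 p h

lemma nat_eq_sum_testBit : ∀ (r n : ℕ), n < 2 ^ r →
    n = ∑ t ∈ Finset.range r, 2 ^ t * (n.testBit t).toNat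
  | 0, n, h => by simpa using Nat.lt_one_iff.mp h
  | r + 1, n, h => by
      have hdiv : n / 2 < 2 ^ r := by
        rw [Nat.div_lt_iff_lt_mul (by norm_num)]
        calc n < 2 ^ (r + 1) := h
        _ = 2 ^ r * 2 := by rw [pow_succ]
      have ih := nat_eq_sum_testBit r (n / 2) hdiv
      have h0 : (n.testBit 0).toNat = n % 2 := by
        rcases Nat.mod_two_eq_zero_or_one n with h' | h' <;> simp [Nat.testBit_zero, h']
      rw [Finset.sum_range_succ', pow_zero, one_mul]
      have hshift : ∀ t, 2 ^ (t + 1) * (n.testBit (t + 1)).toNat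
          = 2 * (2 ^ t * ((n / 2).testBit t).toNat) := by
        intro t
        rw [Nat.testBit_add_one, pow_succ]
        ring
      calc n = 2 * (n / 2) + n % 2 := by omega
      _ = 2 * (∑ t ∈ Finset.range r, 2 ^ t * ((n / 2).testBit t).toNat) + n % 2 := by rw [← ih]
      _ = (∑ t ∈ Finset.range r, 2 ^ (t + 1) * (n.testBit (t + 1)).toNat)
          + (n.testBit 0).toNat := by
        rw [h0, Finset.mul_sum]
        congr 1
        exact (Finset.sum_congr rfl fun t _ => hshift t).symm

lemma binStruct (u : ℕ) (B : Set (ℝ × (Fin u → ℝ))) (hB : IsUnimodularBin u B) :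
    ∃ (Mv : Matrix (Fin u) (Fin u) ℤ) (Ki : Fin u → ℤ),
      ∀ p ∈ B,
        (∀ j, 0 ≤ ∑ k, (Mv j k : ℝ) * p.2 k - (Ki j : ℝ)) ∧
        (∑ j, (∑ k, (Mv j k : ℝ) * p.2 k - (Ki j : ℝ))) ≤ 1 ∧
        p.1 = ∑ j, ((j.val : ℝ) + 1) * (∑ k, (Mv j k : ℝ) * p.2 k - (Ki j : ℝ)) := by
  obtain ⟨-, w, hw01, hBeq, N, hNw, hNdet⟩ := hB
  set M : Matrix (Fin u) (Fin u) ℤ := N.det • N.adjugate with hM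
  have hMN : M * N = 1 := by
    rw [hM, Matrix.smul_mul, Matrix.adjugate_mul, smul_smul]
    rcases hNdet with h | h <;> rw [h] <;> norm_num
  have hzz : ∀ k, ∃ z : ℤ, (z : ℝ) = w 0 k := fun k =>
    (hw01 0 k).elim (fun h => ⟨0, by simp [h]⟩) (fun h => ⟨1, by simp [h]⟩)
  choose ζ hζ using hzz
  classical
  refine ⟨M, fun j => ∑ k, M j k * ζ k, ?_⟩
  set Ki : Fin u → ℤ := fun j => ∑ k, M j k * ζ k with hKi
  have hKiR : ∀ j, (Ki j : ℝ) = ∑ k, (M j k : ℝ) * w 0 k := by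
    intro j
    rw [hKi]
    push_cast
    exact Finset.sum_congr rfl fun k _ => by rw [hζ]
  set lam : Fin u → (ℝ × (Fin u → ℝ)) → ℝ :=
    fun j p => ∑ k, (M j k : ℝ) * p.2 k - (Ki j : ℝ) with hlam
  suffices hsub : B ⊆ {p : ℝ × (Fin u → ℝ) |
      (∀ j, 0 ≤ lam j p) ∧ (∑ j, lam j p) ≤ 1 ∧
      p.1 = ∑ j, ((j.val : ℝ) + 1) * lam j p} by
    intro p hp
    exact hsub hp
  rw [hBeq]
  refine convexHull_min ?_ ?_
  · rintro p ⟨j0, rfl⟩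
    induction j0 using Fin.cases with
    | zero =>
        have hval : ∀ j, lam j ((((0 : Fin (u+1)) : ℕ) : ℝ), w 0) = 0 := by
          intro j
          simp only [hlam]
          rw [hKiR]
          exact sub_self _
        refine ⟨fun j => by rw [hval], by simp only [hval]; simp, by simp only [hval]; simp⟩
    | succ m =>
        have hval : ∀ j, lam j ((((m.succ : Fin (u+1)) : ℕ) : ℝ), w m.succ)
            = if j = m then (1 : ℝ) else 0 := by
          intro j
          have e1 : lam j ((((m.succ : Fin (u+1)) : ℕ) : ℝ), w m.succ)
              = ∑ k, (M j k : ℝ) * (w m.succ k - w 0 k) := by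
            simp only [hlam]
            rw [hKiR, ← Finset.sum_sub_distrib]
            exact Finset.sum_congr rfl fun k _ => by ring
          rw [e1]
          have e2 : ∑ k, (M j k : ℝ) * (w m.succ k - w 0 k)
              = (((M * N) j m : ℤ) : ℝ) := by
            rw [Matrix.mul_apply]
            push_cast
            exact Finset.sum_congr rfl fun k _ => by rw [← hNw k m]
          rw [e2, hMN, Matrix.one_apply]
          split <;> simp
        refine ⟨fun j => by rw [hval]; split <;> norm_num, ?_, ?_⟩
        · simp only [hval]; simp
        · have : ∑ j, ((j.val : ℝ) + 1) * lam j ((((m.succ : Fin (u+1)) : ℕ) : ℝ), w m.succ)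
              = ((m : ℕ) : ℝ) + 1 := by
            simp only [hval, mul_ite]; simp
          rw [this]
          simp [Fin.val_succ]
  · intro x hx y hy a b ha hb hab
    obtain ⟨hx1, hx2, hx3⟩ := hx
    obtain ⟨hy1, hy2, hy3⟩ := hy
    have hcomb : ∀ j, lam j (a • x + b • y) = a * lam j x + b * lam j y := by
      intro j
      simp only [hlam, Prod.snd_add, Prod.smul_snd, Pi.add_apply, Pi.smul_apply, smul_eq_mul]
      have e : ∑ k, (M j k : ℝ) * (a * x.2 k + b * y.2 k)
          = a * ∑ k, (M j k : ℝ) * x.2 k + b * ∑ k, (M j k : ℝ) * y.2 k := by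
        rw [Finset.mul_sum, Finset.mul_sum, ← Finset.sum_add_distrib]
        exact Finset.sum_congr rfl fun k _ => by ring
      rw [e]
      linear_combination (Ki j : ℝ) * hab
    refine ⟨fun j => by
        rw [hcomb]
        exact add_nonneg (mul_nonneg ha (hx1 j)) (mul_nonneg hb (hy1 j)), ?_, ?_⟩
    · have e : ∑ j, lam j (a • x + b • y) = a * (∑ j, lam j x) + b * (∑ j, lam j y) := by
        rw [Finset.mul_sum, Finset.mul_sum, ← Finset.sum_add_distrib]
        exact Finset.sum_congr rfl fun j _ => hcomb j
      rw [e]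
      nlinarith [mul_le_mul_of_nonneg_left hx2 ha, mul_le_mul_of_nonneg_left hy2 hb]
    · have e1 : (a • x + b • y).1 = a * x.1 + b * y.1 := by
        simp [Prod.fst_add, Prod.smul_fst, smul_eq_mul]
      rw [e1, hx3, hy3, Finset.mul_sum, Finset.mul_sum, ← Finset.sum_add_distrib]
      exact Finset.sum_congr rfl fun j _ => by rw [hcomb]; ring

def tbz (t jv : ℕ) : ℤ := if Nat.testBit (jv + 1) t then 1 else 0

lemma tbz_bounds (t jv : ℕ) : (0 : ℝ) ≤ (tbz t jv : ℝ) ∧ (tbz t jv : ℝ) ≤ 1 := by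
  simp only [tbz]; split <;> norm_num

def ccF {l : ℕ} (u : Fin l → ℕ) (Mv : (i : Fin l) → Matrix (Fin (u i)) (Fin (u i)) ℤ)
    (i : Fin l) (t : ℕ) : (i' : Fin l) → Fin (u i') → ℤ :=
  fun i' k => if i' = i then ∑ j, tbz t j.val * Mv i' j k else 0

def f0 {n l : ℕ} (hln : l ≤ n) (u : Fin l → ℕ)
    (Mv : (i : Fin l) → Matrix (Fin (u i)) (Fin (u i)) ℤ) (i : Fin l) (t : ℕ) :
    ((Fin n → ℝ) × ((i : Fin l) → Fin (u i) → ℝ)) → ℝ :=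
  fun p => (∑ i', (((fun _ : Fin l => (0 : ℤ)) i' : ℤ) : ℝ) * p.1 (Fin.castLE hln i')) +
    ∑ i', ∑ j, ((ccF u Mv i t i' j : ℤ) : ℝ) * p.2 i' j

lemma f0_mem {n l : ℕ} (hln : l ≤ n) (u : Fin l → ℕ)
    (Mv : (i : Fin l) → Matrix (Fin (u i)) (Fin (u i)) ℤ) (i : Fin l) (t : ℕ) :
    f0 hln u Mv i t ∈ extSplits n l hln (fun i => u i) :=
  ⟨fun _ => 0, ccF u Mv i t, rfl⟩

lemma f0_eq {n l : ℕ} (hln : l ≤ n) (u : Fin l → ℕ)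
    (Mv : (i : Fin l) → Matrix (Fin (u i)) (Fin (u i)) ℤ) (i : Fin l) (t : ℕ)
    (p : (Fin n → ℝ) × ((i : Fin l) → Fin (u i) → ℝ)) :
    f0 hln u Mv i t p = ∑ j, ((ccF u Mv i t i j : ℤ) : ℝ) * p.2 i j := by
  classical
  simp only [f0, Int.cast_zero, zero_mul, Finset.sum_const_zero, zero_add]
  rw [Finset.sum_eq_single i]
  · intro i' _ hne
    have : ∀ j : Fin (u i'), ccF u Mv i t i' j = 0 := fun j => if_neg hne
    simp [this]
  · intro h; exact absurd (Finset.mem_univ i) h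

def F0 {n l : ℕ} (hln : l ≤ n) (u : Fin l → ℕ)
    (Mv : (i : Fin l) → Matrix (Fin (u i)) (Fin (u i)) ℤ) (i : Fin l) (t : ℕ) :
    ((Fin n → ℝ) × ((i : Fin l) → Fin (u i) → ℝ)) →ₗ[ℝ] ℝ where
  toFun := f0 hln u Mv i t
  map_add' x y := by
    simp only [f0, Prod.fst_add, Prod.snd_add, Pi.add_apply, mul_add, Finset.sum_add_distrib]
    ring
  map_smul' a x := by
    simp only [f0, Prod.smul_fst, Prod.smul_snd, Pi.smul_apply, smul_eq_mul, RingHom.id_apply,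
      Int.cast_zero, zero_mul, Finset.sum_const_zero, zero_add, Finset.mul_sum]
    exact Finset.sum_congr rfl fun i' _ => Finset.sum_congr rfl fun j _ => by ring

def KK {l : ℕ} (u : Fin l → ℕ) (Ki : (i : Fin l) → Fin (u i) → ℤ) (i : Fin l) (t : ℕ) : ℤ :=
  ∑ j, tbz t j.val * Ki i j

lemma f0_decomp {n l : ℕ} (hln : l ≤ n) (u : Fin l → ℕ)
    (Mv : (i : Fin l) → Matrix (Fin (u i)) (Fin (u i)) ℤ)
    (Ki : (i : Fin l) → Fin (u i) → ℤ) (i : Fin l) (t : ℕ)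
    (p : (Fin n → ℝ) × ((i : Fin l) → Fin (u i) → ℝ)) :
    f0 hln u Mv i t p =
      (∑ j, (tbz t j.val : ℝ) * (∑ k, (Mv i j k : ℝ) * p.2 i k - (Ki i j : ℝ)))
        + (KK u Ki i t : ℝ) := by
  rw [f0_eq]
  have e1 : ∀ k : Fin (u i), ((ccF u Mv i t i k : ℤ) : ℝ)
      = ∑ j, (tbz t j.val : ℝ) * (Mv i j k : ℝ) := by
    intro k
    simp only [ccF, if_pos rfl]
    push_cast
    rfl
  have e2 : ((KK u Ki i t : ℤ) : ℝ) = ∑ j, (tbz t j.val : ℝ) * (Ki i j : ℝ) := by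
    simp only [KK]; push_cast; rfl
  calc ∑ k, ((ccF u Mv i t i k : ℤ) : ℝ) * p.2 i k
      = ∑ k, ∑ j, ((tbz t j.val : ℝ) * (Mv i j k : ℝ)) * p.2 i k := by
        refine Finset.sum_congr rfl fun k _ => ?_
        rw [e1, Finset.sum_mul]
  _ = ∑ j, ∑ k, ((tbz t j.val : ℝ) * (Mv i j k : ℝ)) * p.2 i k := Finset.sum_comm
  _ = (∑ j, (tbz t j.val : ℝ) * (∑ k, (Mv i j k : ℝ) * p.2 i k - (Ki i j : ℝ)))
        + ((KK u Ki i t : ℤ) : ℝ) := by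
      rw [e2, ← Finset.sum_add_distrib]
      refine Finset.sum_congr rfl fun j _ => ?_
      have e3 : ∑ k, ((tbz t j.val : ℝ) * (Mv i j k : ℝ)) * p.2 i k
          = (tbz t j.val : ℝ) * ∑ k, (Mv i j k : ℝ) * p.2 i k := by
        rw [Finset.mul_sum]
        exact Finset.sum_congr rfl fun k _ => by ring
      rw [e3]
      ring

theorem stmt4 (n l m : ℕ) (hln : l ≤ n)
    (A : Fin m → Fin n → ℚ) (b : Fin m → ℚ) (u : Fin l → ℕ) (hu : ∀ i, 0 < u i)
    (P : Set (Fin n → ℝ))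
    (hP : P = {x | (∀ r, ∑ j, (A r j : ℝ) * x j ≤ (b r : ℝ)) ∧
      ∀ i : Fin l, 0 ≤ x (Fin.castLE hln i) ∧ x (Fin.castLE hln i) ≤ (u i : ℝ)})
    (hPbdd : Bornology.IsBounded P)
    (B : (i : Fin l) → Set (ℝ × (Fin (u i) → ℝ)))
    (hB : ∀ i, IsUnimodularBin (u i) (B i))
    (q : ℕ) (hq : q = ∑ i, Nat.clog 2 (u i + 1)) :
    Prod.fst '' ((splitClosure (extSplits n l hln (fun i => u i)))^[q] (extForm hln P B)) =
      convexHull ℝ {x ∈ P | ∀ i : Fin l, ∃ w : ℤ, x (Fin.castLE hln i) = (w : ℝ)} := by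
  classical
  choose w hw01 hBeq N hNw hNdet using fun i => (hB i).2
  choose Mv Ki hMK using fun i => binStruct (u i) (B i) (hB i)
  -- the list of split functionals
  set L : List ((((Fin n → ℝ) × ((i : Fin l) → Fin (u i) → ℝ)) →ₗ[ℝ] ℝ) × ℤ) :=
    (Finset.univ.toList (α := (i : Fin l) × Fin (Nat.clog 2 (u i + 1)))).map
      (fun σ => (F0 hln u Mv σ.1 σ.2.val, KK u Ki σ.1 σ.2.val)) with hL
  have hlen : L.length = q := by
    rw [hL, List.length_map, Finset.length_toList, Finset.card_univ, Fintype.card_sigma]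
    simp [hq]
  have hmemL : ∀ pr ∈ L, ⇑pr.1 ∈ extSplits n l hln (fun i => u i) := by
    intro pr hpr
    rw [hL, List.mem_map] at hpr
    obtain ⟨σ, -, rfl⟩ := hpr
    exact f0_mem hln u Mv σ.1 σ.2.val
  have hbdL : ∀ pr ∈ L, ∀ x ∈ extForm hln P B,
      ((pr.2 : ℝ) ≤ pr.1 x ∧ pr.1 x ≤ (pr.2 : ℝ) + 1) := by
    intro pr hpr x hx
    rw [hL, List.mem_map] at hpr
    obtain ⟨σ, -, rfl⟩ := hpr
    obtain ⟨h1, h2, -⟩ := hMK σ.1 _ (hx.2 σ.1)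
    have hge : 0 ≤ ∑ j, (tbz σ.2.val j.val : ℝ) *
        (∑ k, (Mv σ.1 j k : ℝ) * x.2 σ.1 k - (Ki σ.1 j : ℝ)) :=
      Finset.sum_nonneg fun j _ => mul_nonneg (tbz_bounds _ _).1 (h1 j)
    have hle : (∑ j, (tbz σ.2.val j.val : ℝ) *
        (∑ k, (Mv σ.1 j k : ℝ) * x.2 σ.1 k - (Ki σ.1 j : ℝ))) ≤ 1 :=
      le_trans (Finset.sum_le_sum fun j _ =>
        mul_le_of_le_one_left (h1 j) (tbz_bounds _ _).2) h2
    have hdec := f0_decomp hln u Mv Ki σ.1 σ.2.val x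
    constructor
    · show (KK u Ki σ.1 σ.2.val : ℝ) ≤ f0 hln u Mv σ.1 σ.2.val x
      rw [hdec]; linarith
    · show f0 hln u Mv σ.1 σ.2.val x ≤ (KK u Ki σ.1 σ.2.val : ℝ) + 1
      rw [hdec]; linarith
  have hgen := gen_lemma (extSplits n l hln (fun i => u i)) L
    (extForm hln P B) (extForm hln P B) hmemL hbdL (subset_convexHull ℝ _)
  rw [hlen] at hgen
  -- points in the final condition set have integral x_i
  have hcond : extForm hln P B ∩
      {p | ∀ pr ∈ L, pr.1 p = (pr.2 : ℝ) ∨ pr.1 p = (pr.2 : ℝ) + 1} ⊆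
      {p : (Fin n → ℝ) × ((i : Fin l) → Fin (u i) → ℝ) |
        p.1 ∈ P ∧ ∀ i : Fin l, ∃ wz : ℤ, p.1 (Fin.castLE hln i) = (wz : ℝ)} := by
    rintro p ⟨hp0, hpc⟩
    refine ⟨hp0.1, fun i => ?_⟩
    have hval : ∀ t : Fin (Nat.clog 2 (u i + 1)), ∃ e : ℤ,
        (∑ j, (tbz t.val j.val : ℝ) *
          (∑ k, (Mv i j k : ℝ) * p.2 i k - (Ki i j : ℝ))) = (e : ℝ) := by
      intro t
      have hmem2 : (F0 hln u Mv i t.val, KK u Ki i t.val) ∈ L := by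
        rw [hL, List.mem_map]
        exact ⟨⟨i, t⟩, Finset.mem_toList.mpr (Finset.mem_univ _), rfl⟩
      have hdec := f0_decomp hln u Mv Ki i t.val p
      rcases hpc _ hmem2 with h | h
      · refine ⟨0, ?_⟩
        have h' : f0 hln u Mv i t.val p = (KK u Ki i t.val : ℝ) := h
        rw [hdec] at h'
        push_cast
        linarith
      · refine ⟨1, ?_⟩
        have h' : f0 hln u Mv i t.val p = (KK u Ki i t.val : ℝ) + 1 := h
        rw [hdec] at h'
        push_cast
        linarith
    choose e he using hval
    refine ⟨∑ t : Fin (Nat.clog 2 (u i + 1)), 2 ^ t.val * e t, ?_⟩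
    have hx3' : p.1 (Fin.castLE hln i) = ∑ j, ((j.val : ℝ) + 1) *
        (∑ k, (Mv i j k : ℝ) * p.2 i k - (Ki i j : ℝ)) := (hMK i _ (hp0.2 i)).2.2
    rw [hx3']
    have hbit : ∀ j : Fin (u i), ((j.val : ℝ) + 1)
        = ∑ t ∈ Finset.range (Nat.clog 2 (u i + 1)), (2:ℝ)^t * (tbz t j.val : ℝ) := by
      intro j
      have hlt : j.val + 1 < 2 ^ Nat.clog 2 (u i + 1) := by
        have h1 : u i + 1 ≤ 2 ^ Nat.clog 2 (u i + 1) := Nat.le_pow_clog (by norm_num) _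
        have := j.isLt
        omega
      have hn := nat_eq_sum_testBit (Nat.clog 2 (u i + 1)) (j.val + 1) hlt
      have hcast : ((j.val : ℝ) + 1) = ((∑ t ∈ Finset.range (Nat.clog 2 (u i + 1)),
          2 ^ t * ((j.val + 1).testBit t).toNat : ℕ) : ℝ) := by
        rw [← hn]; push_cast; ring
      rw [hcast]
      push_cast
      refine Finset.sum_congr rfl fun t _ => ?_
      congr 1
      rcases Bool.eq_false_or_eq_true ((j.val + 1).testBit t) with hb | hb <;>
        simp [tbz, hb]
    calc ∑ j, ((j.val : ℝ) + 1) * (∑ k, (Mv i j k : ℝ) * p.2 i k - (Ki i j : ℝ))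
        = ∑ j, ∑ t ∈ Finset.range (Nat.clog 2 (u i + 1)),
            ((2:ℝ)^t * (tbz t j.val : ℝ)) * (∑ k, (Mv i j k : ℝ) * p.2 i k - (Ki i j : ℝ)) := by
          refine Finset.sum_congr rfl fun j _ => ?_
          rw [hbit j, Finset.sum_mul]
    _ = ∑ t ∈ Finset.range (Nat.clog 2 (u i + 1)), ∑ j,
            ((2:ℝ)^t * (tbz t j.val : ℝ)) * (∑ k, (Mv i j k : ℝ) * p.2 i k - (Ki i j : ℝ)) :=
          Finset.sum_comm
    _ = ∑ t ∈ Finset.range (Nat.clog 2 (u i + 1)), (2:ℝ)^t *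
            (∑ j, (tbz t j.val : ℝ) * (∑ k, (Mv i j k : ℝ) * p.2 i k - (Ki i j : ℝ))) := by
          refine Finset.sum_congr rfl fun t _ => ?_
          rw [Finset.mul_sum]
          exact Finset.sum_congr rfl fun j _ => by ring
    _ = ∑ t : Fin (Nat.clog 2 (u i + 1)), (2:ℝ)^t.val *
            (∑ j, (tbz t.val j.val : ℝ) * (∑ k, (Mv i j k : ℝ) * p.2 i k - (Ki i j : ℝ))) :=
          (Fin.sum_univ_eq_sum_range (fun t => (2:ℝ)^t *
            (∑ j, (tbz t j.val : ℝ) * (∑ k, (Mv i j k : ℝ) * p.2 i k - (Ki i j : ℝ)))) _).symm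
    _ = ∑ t : Fin (Nat.clog 2 (u i + 1)), (2:ℝ)^t.val * (e t : ℝ) := by
          refine Finset.sum_congr rfl fun t _ => ?_
          rw [he t]
    _ = ((∑ t : Fin (Nat.clog 2 (u i + 1)), 2 ^ t.val * e t : ℤ) : ℝ) := by
          push_cast
          rfl
  -- forward inclusion
  have hsub1 : Prod.fst ''
      ((splitClosure (extSplits n l hln (fun i => u i)))^[q] (extForm hln P B)) ⊆
      convexHull ℝ {x ∈ P | ∀ i : Fin l, ∃ w : ℤ, x (Fin.castLE hln i) = (w : ℝ)} := by
    rintro x ⟨p, hp, rfl⟩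
    have hp2 := hgen hp
    have himg : Prod.fst '' (convexHull ℝ (extForm hln P B ∩
        {p | ∀ pr ∈ L, pr.1 p = (pr.2 : ℝ) ∨ pr.1 p = (pr.2 : ℝ) + 1}))
        = convexHull ℝ (Prod.fst '' (extForm hln P B ∩
        {p | ∀ pr ∈ L, pr.1 p = (pr.2 : ℝ) ∨ pr.1 p = (pr.2 : ℝ) + 1})) :=
      (LinearMap.fst ℝ (Fin n → ℝ) ((i : Fin l) → Fin (u i) → ℝ)).image_convexHull _
    have hmem3 : p.1 ∈ convexHull ℝ (Prod.fst '' (extForm hln P B ∩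
        {p | ∀ pr ∈ L, pr.1 p = (pr.2 : ℝ) ∨ pr.1 p = (pr.2 : ℝ) + 1})) := by
      rw [← himg]
      exact ⟨p, hp2, rfl⟩
    refine convexHull_mono ?_ hmem3
    rintro y ⟨p', hp', rfl⟩
    exact hcond hp'
  -- backward inclusion
  have hPc : Convex ℝ P := by
    rw [hP]
    intro x hx y hy a c ha hc hac
    constructor
    · intro rr
      have e : ∑ j, (A rr j : ℝ) * (a • x + c • y) j
          = a * (∑ j, (A rr j : ℝ) * x j) + c * (∑ j, (A rr j : ℝ) * y j) := by
        rw [Finset.mul_sum, Finset.mul_sum, ← Finset.sum_add_distrib]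
        refine Finset.sum_congr rfl fun j _ => ?_
        simp only [Pi.add_apply, Pi.smul_apply, smul_eq_mul]
        ring
      rw [e]
      have h1 := hx.1 rr
      have h2 := hy.1 rr
      calc a * (∑ j, (A rr j : ℝ) * x j) + c * (∑ j, (A rr j : ℝ) * y j)
          ≤ a * (b rr : ℝ) + c * (b rr : ℝ) :=
            add_le_add (mul_le_mul_of_nonneg_left h1 ha) (mul_le_mul_of_nonneg_left h2 hc)
      _ = (a + c) * (b rr : ℝ) := by ring
      _ = (b rr : ℝ) := by rw [hac, one_mul]
    · intro i
      have e : (a • x + c • y) (Fin.castLE hln i)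
          = a * x (Fin.castLE hln i) + c * y (Fin.castLE hln i) := by
        simp [smul_eq_mul]
      obtain ⟨hx1, hx2⟩ := hx.2 i
      obtain ⟨hy1, hy2⟩ := hy.2 i
      constructor
      · rw [e]; exact add_nonneg (mul_nonneg ha hx1) (mul_nonneg hc hy1)
      · rw [e]
        calc a * x (Fin.castLE hln i) + c * y (Fin.castLE hln i)
            ≤ a * (u i : ℝ) + c * (u i : ℝ) :=
              add_le_add (mul_le_mul_of_nonneg_left hx2 ha) (mul_le_mul_of_nonneg_left hy2 hc)
        _ = (a + c) * (u i : ℝ) := by ring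
        _ = (u i : ℝ) := by rw [hac, one_mul]
  have hX0c : Convex ℝ (extForm hln P B) := by
    intro p hp p' hp' a c ha hc hac
    refine ⟨hPc hp.1 hp'.1 ha hc hac, fun i => ?_⟩
    have hBc : Convex ℝ (B i) := by rw [hBeq i]; exact convex_convexHull ℝ _
    have hmem4 := hBc (hp.2 i) (hp'.2 i) ha hc hac
    have e : a • (p.1 (Fin.castLE hln i), p.2 i) + c • (p'.1 (Fin.castLE hln i), p'.2 i)
        = ((a • p + c • p').1 (Fin.castLE hln i), (a • p + c • p').2 i) := by
      apply Prod.ext <;> simp [smul_eq_mul]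
    rw [e] at hmem4
    exact hmem4
  have hconvIter : ∀ k, Convex ℝ
      ((splitClosure (extSplits n l hln (fun i => u i)))^[k] (extForm hln P B)) := by
    intro k
    induction k with
    | zero => simpa using hX0c
    | succ k ih =>
        rw [Function.iterate_succ_apply']
        unfold splitClosure
        exact convex_iInter fun f => convex_iInter fun hf => convex_iInter fun c =>
          convex_convexHull ℝ _
  have hlift : {x ∈ P | ∀ i : Fin l, ∃ w : ℤ, x (Fin.castLE hln i) = (w : ℝ)} ⊆
      Prod.fst '' ((splitClosure (extSplits n l hln (fun i => u i)))^[q] (extForm hln P B)) := by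
    rintro x ⟨hxP, hxint⟩
    choose mm hmm using hxint
    have hb0 : ∀ i : Fin l, 0 ≤ mm i ∧ mm i ≤ (u i : ℤ) := by
      intro i
      have hx' : x ∈ {x | (∀ r, ∑ j, (A r j : ℝ) * x j ≤ (b r : ℝ)) ∧
          ∀ i : Fin l, 0 ≤ x (Fin.castLE hln i) ∧ x (Fin.castLE hln i) ≤ (u i : ℝ)} :=
        hP ▸ hxP
      obtain ⟨h1, h2⟩ := hx'.2 i
      rw [hmm i] at h1 h2
      exact ⟨by exact_mod_cast h1, by exact_mod_cast h2⟩
    have hjlt : ∀ i : Fin l, (mm i).toNat < u i + 1 := by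
      intro i
      have := hb0 i
      omega
    set zc : (i : Fin l) → Fin (u i) → ℝ := fun i => w i ⟨(mm i).toNat, hjlt i⟩ with hzc
    have hxi : ∀ i : Fin l, x (Fin.castLE hln i) = (((⟨(mm i).toNat, hjlt i⟩ : Fin (u i + 1)) : ℕ) : ℝ) := by
      intro i
      rw [hmm i]
      show ((mm i : ℤ) : ℝ) = (((mm i).toNat : ℕ) : ℝ)
      exact_mod_cast (Int.toNat_of_nonneg (hb0 i).1).symm
    have hpX0 : (x, zc) ∈ extForm hln P B := by
      refine ⟨hxP, fun i => ?_⟩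
      rw [hBeq i]
      apply subset_convexHull
      exact ⟨⟨(mm i).toNat, hjlt i⟩, Prod.ext (hxi i) rfl⟩
    have hint2 : ∀ f ∈ extSplits n l hln (fun i => u i), ∃ Mz : ℤ, f (x, zc) = (Mz : ℝ) := by
      rintro f ⟨π, cf, rfl⟩
      have hz01 : ∀ (i' : Fin l) (k : Fin (u i')), ∃ ez : ℤ, zc i' k = (ez : ℝ) := by
        intro i' k
        rcases hw01 i' ⟨(mm i').toNat, hjlt i'⟩ k with h | h
        · exact ⟨0, by rw [hzc]; simpa using h⟩
        · exact ⟨1, by rw [hzc]; simpa using h⟩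
      choose ez hez using hz01
      refine ⟨(∑ i', π i' * mm i') + ∑ i', ∑ k, cf i' k * ez i' k, ?_⟩
      have e1 : (∑ i', (π i' : ℝ) * x (Fin.castLE hln i'))
          = ((∑ i', π i' * mm i' : ℤ) : ℝ) := by
        push_cast
        refine Finset.sum_congr rfl fun i' _ => ?_
        rw [hmm i']
      have e2 : (∑ i', ∑ k, (cf i' k : ℝ) * zc i' k)
          = ((∑ i', ∑ k, cf i' k * ez i' k : ℤ) : ℝ) := by
        push_cast
        refine Finset.sum_congr rfl fun i' _ => Finset.sum_congr rfl fun k _ => ?_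
        rw [hez i' k]
      show (∑ i', (π i' : ℝ) * x (Fin.castLE hln i'))
          + (∑ i', ∑ k, (cf i' k : ℝ) * zc i' k) = _
      rw [e1, e2]
      push_cast
      ring
    have havoid : ∀ k, (x, zc) ∈ (splitClosure (extSplits n l hln (fun i => u i)))^[k]
        (extForm hln P B) := by
      intro k
      induction k with
      | zero => exact hpX0
      | succ k ih =>
          rw [Function.iterate_succ_apply']
          refine Set.mem_iInter₂.mpr fun f hf => Set.mem_iInter.mpr fun c => ?_
          refine subset_convexHull ℝ _ ⟨ih, ?_⟩
          obtain ⟨Mz, hMz⟩ := hint2 f hf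
          intro hcon
          obtain ⟨hc1, hc2⟩ := hcon
          rw [hMz] at hc1 hc2
          have g1 : c < Mz := by exact_mod_cast hc1
          have g2 : (Mz : ℝ) < ((c + 1 : ℤ) : ℝ) := by push_cast; linarith
          have g2' : Mz < c + 1 := by exact_mod_cast g2
          omega
    exact ⟨(x, zc), havoid q, rfl⟩
  refine Set.Subset.antisymm hsub1 ?_
  refine convexHull_min hlift ?_
  exact (hconvIter q).linear_image (LinearMap.fst ℝ (Fin n → ℝ) ((i : Fin l) → Fin (u i) → ℝ))
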